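/- Let q be a prime power with q ≠ 2. Every automorphism of the graph NU(3,q^2) maps the set of the q^2 non-isotropic points of a tangent line of H(2,q^2) onto the set of the q^2 non-isotropic points of some tangent line of H(2,q^2). -/

import Mathlib

open Projectivization
open scoped LinearAlgebra.Projectivization

variable (F : Type) [Field F] [Fintype F]

/-- The projective space PG(n, |F|) over `F`, as the projectivization of `Fin (n+1) → F`. -/
abbrev PG (n : ℕ) := ℙ F (Fin (n+1) → F)

/-- The Hermitian variety `H(n,q^2)`: points `[x_0 : ... : x_n]` with
`x_0^{q+1} + ... + x_n^{q+1} = 0`. -/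
def Herm (q n : ℕ) : Set (PG F n) :=
  {p | ∑ i, (p.rep i) ^ (q+1) = 0}

/-- The set of points of `PG(n,q^2)` lying on the line given by a `2`-dimensional subspace. -/
def lineSet (n : ℕ) (W : Submodule F (Fin (n+1) → F)) : Set (PG F n) :=
  {p | p.submodule ≤ W}

/-- `W` determines a line of `PG(n,q^2)`, i.e. it is a `2`-dimensional subspace. -/
def IsLine (n : ℕ) (W : Submodule F (Fin (n+1) → F)) : Prop :=
  Module.finrank F W = 2

/-- A line is tangent to `H(n,q^2)` if it meets it in exactly one point. -/
def IsTangent (q n : ℕ) (W : Submodule F (Fin (n+1) → F)) : Prop :=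
  IsLine F n W ∧ (lineSet F n W ∩ Herm F q n).ncard = 1

/-- The graph `NU(n+1,q^2)`: vertices are points off the Hermitian variety, two distinct
vertices adjacent iff the line joining them is tangent to `H(n,q^2)`. -/
def NU (q n : ℕ) : SimpleGraph {p : PG F n // p ∉ Herm F q n} where
  Adj u v := u ≠ v ∧ IsTangent F q n (Submodule.span F {u.1.rep, v.1.rep})
  symm := ⟨by
    rintro u v ⟨h1, h2⟩
    exact ⟨h1.symm, by rwa [Set.pair_comm]⟩⟩
  loopless := ⟨fun u h => h.1 rfl⟩

/-- A strongly regular graph with parameters `(v, k, l, m)`. -/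
def IsSRG {V : Type} (G : SimpleGraph V) (v k l m : ℤ) : Prop :=
  (Nat.card V : ℤ) = v ∧
  (∀ x, (Nat.card (G.neighborSet x) : ℤ) = k) ∧
  (∀ x y, G.Adj x y → (Nat.card (G.commonNeighbors x y) : ℤ) = l) ∧
  (∀ x y, x ≠ y → ¬ G.Adj x y → (Nat.card (G.commonNeighbors x y) : ℤ) = m)

/-- The set of vertices of `NU(n+1,q^2)` (non-isotropic points) lying on the line `W`. -/
def lineVerts (q n : ℕ) (W : Submodule F (Fin (n+1) → F)) :
    Set {p : PG F n // p ∉ Herm F q n} :=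
  {u | u.1 ∈ lineSet F n W}

/-! ### Auxiliary development -/

section Aux
set_option linter.unusedSectionVars false

variable {F}

open Module Polynomial

/-- The Hermitian sesquilinear form. -/
def hform (q : ℕ) (x y : Fin 3 → F) : F := ∑ i, x i * y i ^ q

variable {q : ℕ}

instance : Finite (PG F 2) := Quotient.finite _

lemma hform_add_left (x y z : Fin 3 → F) :
    hform q (x + y) z = hform q x z + hform q y z := by
  simp [hform, add_mul, Finset.sum_add_distrib]

lemma hform_sub_left (x y z : Fin 3 → F) :
    hform q (x - y) z = hform q x z - hform q y z := by
  simp [hform, sub_mul, Finset.sum_sub_distrib]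

lemma hform_smul_left (c : F) (x z : Fin 3 → F) :
    hform q (c • x) z = c * hform q x z := by
  simp only [hform, Pi.smul_apply, smul_eq_mul, Finset.mul_sum]
  exact Finset.sum_congr rfl fun i _ => by ring

lemma hform_smul_right (c : F) (x z : Fin 3 → F) :
    hform q x (c • z) = c ^ q * hform q x z := by
  simp only [hform, Pi.smul_apply, smul_eq_mul, mul_pow, Finset.mul_sum]
  exact Finset.sum_congr rfl fun i _ => by ring

lemma hform_add_right (hfrob : ∀ x y : F, (x + y) ^ q = x ^ q + y ^ q) (x y z : Fin 3 → F) :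
    hform q x (y + z) = hform q x y + hform q x z := by
  simp only [hform, Pi.add_apply, hfrob, mul_add, Finset.sum_add_distrib]

lemma powq_powq (hF : Fintype.card F = q ^ 2) (x : F) : (x ^ q) ^ q = x := by
  have h := FiniteField.pow_card x
  rw [hF, pow_two, pow_mul] at h
  exact h

lemma sub_powq (hfrob : ∀ x y : F, (x + y) ^ q = x ^ q + y ^ q) (x y : F) :
    (x - y) ^ q = x ^ q - y ^ q := by
  have h := hfrob (x - y) y
  rw [sub_add_cancel] at h
  exact eq_sub_of_add_eq h.symm

lemma neg_powq (hq0 : q ≠ 0) (hfrob : ∀ x y : F, (x + y) ^ q = x ^ q + y ^ q) (x : F) :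
    (-x) ^ q = -(x ^ q) := by
  have h := hfrob x (-x)
  rw [add_neg_cancel, zero_pow hq0] at h
  exact eq_neg_of_add_eq_zero_right h.symm

lemma hform_conj (hfrob : ∀ x y : F, (x + y) ^ q = x ^ q + y ^ q)
    (hF : Fintype.card F = q ^ 2) (x y : Fin 3 → F) :
    hform q y x = (hform q x y) ^ q := by
  rw [hform, hform, Fin.sum_univ_three, Fin.sum_univ_three, hfrob, hfrob,
    mul_pow, mul_pow, mul_pow, powq_powq hF, powq_powq hF, powq_powq hF]
  ring

lemma hform_self_powq (hfrob : ∀ x y : F, (x + y) ^ q = x ^ q + y ^ q)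
    (hF : Fintype.card F = q ^ 2) (x : Fin 3 → F) :
    (hform q x x) ^ q = hform q x x :=
  (hform_conj hfrob hF x x).symm

lemma hform_comb (hfrob : ∀ x y : F, (x + y) ^ q = x ^ q + y ^ q) (a b : Fin 3 → F) (s : F) :
    hform q (a + s • b) (a + s • b) =
      hform q a a + s * hform q b a + s ^ q * hform q a b + (s ^ q * s) * hform q b b := by
  rw [hform_add_left, hform_add_right hfrob, hform_add_right hfrob, hform_smul_left,
    hform_smul_left, hform_smul_right, hform_smul_right]
  ring

/-! ### Projectivization helpers -/

lemma herm_iff_rep (p : PG F 2) : p ∈ Herm F q 2 ↔ hform q p.rep p.rep = 0 := by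
  have he : (∑ i, (p.rep i) ^ (q + 1)) = hform q p.rep p.rep := by
    refine Finset.sum_congr rfl fun i _ => ?_
    rw [pow_succ']
  unfold Herm
  rw [Set.mem_setOf_eq, he]

lemma rep_mk_smul (v : Fin 3 → F) (hv : v ≠ 0) :
    ∃ lam : F, lam ≠ 0 ∧ (Projectivization.mk F v hv).rep = lam • v := by
  obtain ⟨a, ha⟩ := exists_smul_eq_mk_rep F v hv
  exact ⟨(a : F), a.ne_zero, by rw [← ha, Units.smul_def]⟩

lemma herm_mk (hq0 : q ≠ 0) (v : Fin 3 → F) (hv : v ≠ 0) :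
    Projectivization.mk F v hv ∈ Herm F q 2 ↔ hform q v v = 0 := by
  rw [herm_iff_rep]
  obtain ⟨lam, hl, hrep⟩ := rep_mk_smul v hv
  rw [hrep, hform_smul_left, hform_smul_right, mul_eq_zero, mul_eq_zero]
  simp [hl, pow_eq_zero_iff hq0]

lemma vertex_noniso (u : {p : PG F 2 // p ∉ Herm F q 2}) :
    hform q u.1.rep u.1.rep ≠ 0 := fun h => u.2 ((herm_iff_rep _).2 h)

lemma submodule_le_iff (p : PG F 2) (W : Submodule F (Fin 3 → F)) :
    p.submodule ≤ W ↔ p.rep ∈ W := by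
  rw [Projectivization.submodule_eq, Submodule.span_singleton_le_iff_mem]

lemma indep_of_ne {p p' : PG F 2} (h : p ≠ p') :
    LinearIndependent F ![p.rep, p'.rep] := by
  have h1 := Projectivization.independent_iff.1 ((Projectivization.independent_pair_iff_ne p p').2 h)
  have heq : Projectivization.rep ∘ ![p, p'] = ![p.rep, p'.rep] := by
    ext i
    fin_cases i <;> rfl
  rwa [heq] at h1

lemma pair_fst_ne_zero {a b : Fin 3 → F} (h : LinearIndependent F ![a, b]) : a ≠ 0 := by
  have := h.ne_zero 0
  simpa using this

lemma pair_snd_ne_zero {a b : Fin 3 → F} (h : LinearIndependent F ![a, b]) : b ≠ 0 := by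
  have := h.ne_zero 1
  simpa using this

lemma pair_comb_ne_zero {a b : Fin 3 → F} (h : LinearIndependent F ![a, b]) (s : F) :
    a + s • b ≠ 0 := by
  intro h0
  have := (LinearIndependent.pair_iff.1 h 1 s (by rw [one_smul]; exact h0)).1
  simp at this

lemma mk_param_inj {a b : Fin 3 → F} (h : LinearIndependent F ![a, b]) {s s' : F}
    (hne : s ≠ s') :
    Projectivization.mk F (a + s • b) (pair_comb_ne_zero h s) ≠
      Projectivization.mk F (a + s' • b) (pair_comb_ne_zero h s') := by
  intro he
  rw [Projectivization.mk_eq_mk_iff'] at he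
  obtain ⟨d, hd⟩ := he
  have key : (d - 1) • a + (d * s' - s) • b = d • (a + s' • b) - (a + s • b) := by module
  rw [hd, sub_self] at key
  obtain ⟨h1, h2⟩ := LinearIndependent.pair_iff.1 h _ _ key
  apply hne
  have hd1 : d = 1 := by rwa [sub_eq_zero] at h1
  rw [hd1, one_mul] at h2
  exact (sub_eq_zero.1 h2).symm

lemma mk_snd_ne_param {a b : Fin 3 → F} (h : LinearIndependent F ![a, b]) (s : F) :
    Projectivization.mk F b (pair_snd_ne_zero h) ≠
      Projectivization.mk F (a + s • b) (pair_comb_ne_zero h s) := by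
  intro he
  rw [Projectivization.mk_eq_mk_iff'] at he
  obtain ⟨d, hd⟩ := he
  have key : d • a + (d * s - 1) • b = d • (a + s • b) - b := by module
  rw [hd, sub_self] at key
  obtain ⟨h1, h2⟩ := LinearIndependent.pair_iff.1 h _ _ key
  rw [h1, zero_mul] at h2
  simp at h2

/-! ### Linear algebra -/

/-- The functional `x ↦ hform q x v`. -/
def phiF (q : ℕ) (v : Fin 3 → F) : (Fin 3 → F) →ₗ[F] F where
  toFun x := hform q x v
  map_add' x y := hform_add_left x y v
  map_smul' c x := by simpa using hform_smul_left c x v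

@[simp] lemma phiF_apply (v x : Fin 3 → F) : phiF q v x = hform q x v := rfl

lemma hform_single (i : Fin 3) (v : Fin 3 → F) :
    hform q (Pi.single i 1) v = (v i) ^ q := by
  rw [hform]
  rw [Finset.sum_eq_single i]
  · simp
  · intro j _ hji
    simp [Pi.single_apply, hji]
  · simp

lemma phiF_ne_zero (hq0 : q ≠ 0) {v : Fin 3 → F} (hv : v ≠ 0) : phiF q v ≠ 0 := by
  intro h0
  obtain ⟨i, hi⟩ := Function.ne_iff.1 hv
  have h1 : phiF q v (Pi.single i 1) = 0 := by rw [h0]; rfl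
  rw [phiF_apply, hform_single] at h1
  exact hi (by simpa [pow_eq_zero_iff hq0] using h1)

lemma finrank_pi3 : finrank F (Fin 3 → F) = 3 := by simp

lemma finrank_ker_phiF (hq0 : q ≠ 0) {v : Fin 3 → F} (hv : v ≠ 0) :
    finrank F (LinearMap.ker (phiF q v)) = 2 := by
  have hrn := LinearMap.finrank_range_add_finrank_ker (phiF q v)
  rw [finrank_pi3] at hrn
  have hle : finrank F (LinearMap.range (phiF q v)) ≤ 1 := by
    simpa using Submodule.finrank_le (LinearMap.range (phiF q v))
  have hpos : 0 < finrank F (LinearMap.range (phiF q v)) := by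
    rw [finrank_pos_iff]
    rw [Submodule.nontrivial_iff_ne_bot, Ne, LinearMap.range_eq_bot]
    exact phiF_ne_zero hq0 hv
  omega

lemma finrank_span_pair {a b : Fin 3 → F} (h : LinearIndependent F ![a, b]) :
    finrank F ↥(Submodule.span F {a, b}) = 2 := by
  have h1 := finrank_span_eq_card h
  rwa [Matrix.range_cons_cons_empty, Fintype.card_fin] at h1

lemma span_pair_eq {a b : Fin 3 → F} (h : LinearIndependent F ![a, b])
    {W : Submodule F (Fin 3 → F)} (hle : Submodule.span F {a, b} ≤ W)
    (hW : finrank F W = 2) : Submodule.span F {a, b} = W :=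
  Submodule.eq_of_le_of_finrank_le hle (by rw [hW, finrank_span_pair h])

lemma exists_basis_of_finrank_two {W : Submodule F (Fin 3 → F)} (hW : finrank F W = 2) :
    ∃ a b, LinearIndependent F ![a, b] ∧ Submodule.span F {a, b} = W := by
  have hbot : W ≠ ⊥ := by
    intro h
    rw [h, finrank_bot] at hW
    omega
  obtain ⟨a, haW, ha0⟩ := Submodule.exists_mem_ne_zero_of_ne_bot hbot
  have hlt : Submodule.span F {a} < W := by
    refine lt_of_le_of_ne ((Submodule.span_singleton_le_iff_mem a W).2 haW) ?_
    intro h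
    rw [← h, finrank_span_singleton ha0] at hW
    omega
  obtain ⟨b, hbW, hbs⟩ := SetLike.exists_of_lt hlt
  have hab : LinearIndependent F ![a, b] := by
    rw [LinearIndependent.pair_iff]
    intro s t hst
    rcases eq_or_ne t 0 with rfl | ht
    · rw [zero_smul, add_zero, smul_eq_zero] at hst
      exact ⟨hst.resolve_right ha0, rfl⟩
    · exfalso
      apply hbs
      rw [Submodule.mem_span_singleton]
      have h1 : t • b = -(s • a) := eq_neg_of_add_eq_zero_right hst
      refine ⟨-s / t, ?_⟩
      have h2 : t⁻¹ • (t • b) = t⁻¹ • (-(s • a)) := by rw [h1]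
      rw [smul_smul, inv_mul_cancel₀ ht, one_smul, smul_neg, smul_smul] at h2
      rw [h2, ← neg_smul]
      congr 1
      field_simp
  refine ⟨a, b, hab, span_pair_eq hab ?_ hW⟩
  rw [Submodule.span_le]
  rintro x (rfl | rfl)
  · exact haW
  · exact hbW

lemma finrank_inf_ker (hfrob : ∀ x y : F, (x + y) ^ q = x ^ q + y ^ q)
    (hF : Fintype.card F = q ^ 2) (hq0 : q ≠ 0) {a b : Fin 3 → F}
    (hab : LinearIndependent F ![a, b]) :
    finrank F ↥(LinearMap.ker (phiF q a) ⊓ LinearMap.ker (phiF q b)) = 1 := by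
  have ha0 : a ≠ 0 := pair_fst_ne_zero hab
  have hb0 : b ≠ 0 := pair_snd_ne_zero hab
  have hka : finrank F (LinearMap.ker (phiF q a)) = 2 := finrank_ker_phiF hq0 ha0
  have hkb : finrank F (LinearMap.ker (phiF q b)) = 2 := finrank_ker_phiF hq0 hb0
  have hsum := Submodule.finrank_sup_add_finrank_inf_eq
    (LinearMap.ker (phiF q a)) (LinearMap.ker (phiF q b))
  rw [hka, hkb] at hsum
  have hsup : finrank F ↥(LinearMap.ker (phiF q a) ⊔ LinearMap.ker (phiF q b)) ≤ 3 := by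
    have := Submodule.finrank_le (LinearMap.ker (phiF q a) ⊔ LinearMap.ker (phiF q b))
    rwa [finrank_pi3] at this
  have hge : 1 ≤ finrank F ↥(LinearMap.ker (phiF q a) ⊓ LinearMap.ker (phiF q b)) := by omega
  by_contra hne
  have h2 : 2 ≤ finrank F ↥(LinearMap.ker (phiF q a) ⊓ LinearMap.ker (phiF q b)) := by omega
  have hea : LinearMap.ker (phiF q a) ⊓ LinearMap.ker (phiF q b) = LinearMap.ker (phiF q a) :=
    Submodule.eq_of_le_of_finrank_le inf_le_left (by omega)
  have heb : LinearMap.ker (phiF q a) ⊓ LinearMap.ker (phiF q b) = LinearMap.ker (phiF q b) :=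
    Submodule.eq_of_le_of_finrank_le inf_le_right (by omega)
  have hk : LinearMap.ker (phiF q a) = LinearMap.ker (phiF q b) := by rw [← hea, heb]
  -- find y outside the common kernel
  have hktop : LinearMap.ker (phiF q a) ≠ ⊤ := by
    rw [Ne, LinearMap.ker_eq_top]
    exact phiF_ne_zero hq0 ha0
  have hy : ∃ y, y ∉ LinearMap.ker (phiF q a) := by
    by_contra hall
    push_neg at hall
    exact hktop (Submodule.eq_top_iff'.2 hall)
  obtain ⟨y, hy⟩ := hy
  have hα : hform q y a ≠ 0 := by
    intro h
    exact hy (LinearMap.mem_ker.2 (by rw [phiF_apply, h]))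
  have hβ : hform q y b ≠ 0 := by
    intro h
    apply hy
    rw [hk]
    exact LinearMap.mem_ker.2 (by rw [phiF_apply, h])
  have hprop : ∀ x, hform q y b * hform q x a = hform q y a * hform q x b := by
    intro x
    have hz : x - (hform q x a / hform q y a) • y ∈ LinearMap.ker (phiF q a) := by
      rw [LinearMap.mem_ker, map_sub, map_smul]
      simp only [phiF_apply, smul_eq_mul, RingHom.id_apply]
      rw [div_mul_cancel₀ _ hα, sub_self]
    rw [hk, LinearMap.mem_ker, map_sub, map_smul] at hz
    simp only [phiF_apply, smul_eq_mul, RingHom.id_apply] at hz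
    have h5 : hform q x b = hform q x a / hform q y a * hform q y b := sub_eq_zero.1 hz
    rw [h5]
    field_simp
  have hco : ∀ i, hform q y b * (a i) ^ q = hform q y a * (b i) ^ q := by
    intro i
    have := hprop (Pi.single i 1)
    rwa [hform_single, hform_single] at this
  have hco2 : ∀ i, (hform q y b) ^ q * a i = (hform q y a) ^ q * b i := by
    intro i
    have := congrArg (· ^ q) (hco i)
    simpa [mul_pow, powq_powq hF] using this
  have key : ((hform q y b) ^ q) • a + (-(hform q y a) ^ q) • b = 0 := by
    funext i
    simp only [Pi.add_apply, Pi.smul_apply, smul_eq_mul, Pi.zero_apply]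
    linear_combination hco2 i
  obtain ⟨h1, _⟩ := LinearIndependent.pair_iff.1 hab _ _ key
  exact hβ (by simpa [pow_eq_zero_iff hq0] using h1)

lemma eq_smul_of_finrank_one {U : Submodule F (Fin 3 → F)} (hU : finrank F U = 1)
    {z t : Fin 3 → F} (hz : z ∈ U) (hz0 : z ≠ 0) (ht : t ∈ U) : ∃ c : F, t = c • z := by
  have hsp : Submodule.span F {z} = U :=
    Submodule.eq_of_le_of_finrank_le ((Submodule.span_singleton_le_iff_mem z U).2 hz)
      (by rw [hU, finrank_span_singleton hz0])
  rw [← hsp] at ht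
  obtain ⟨c, hc⟩ := Submodule.mem_span_singleton.1 ht
  exact ⟨c, hc.symm⟩

/-! ### Counting -/

lemma ncard_roots_le (P : Polynomial F) (hP : P ≠ 0) :
    {s : F | Polynomial.eval s P = 0}.ncard ≤ P.natDegree := by
  classical
  have hsub : {s : F | Polynomial.eval s P = 0} ⊆ ↑P.roots.toFinset := by
    intro s hs
    rw [Set.mem_setOf_eq] at hs
    simp only [Finset.coe_sort_coe, Multiset.mem_toFinset, Finset.mem_coe]
    exact (Polynomial.mem_roots hP).2 hs
  calc {s : F | Polynomial.eval s P = 0}.ncard ≤ (↑P.roots.toFinset : Set F).ncard :=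
        Set.ncard_le_ncard hsub (Set.toFinite _)
    _ = P.roots.toFinset.card := Set.ncard_coe_finset _
    _ ≤ Multiset.card P.roots := Multiset.toFinset_card_le _
    _ ≤ P.natDegree := Polynomial.card_roots' P

lemma point_on_line {a b : Fin 3 → F} (hab : LinearIndependent F ![a, b]) {p : PG F 2}
    (hp : p.submodule ≤ Submodule.span F {a, b}) :
    p = Projectivization.mk F b (pair_snd_ne_zero hab) ∨
      ∃ s : F, p = Projectivization.mk F (a + s • b) (pair_comb_ne_zero hab s) := by
  have hrep : p.rep ∈ Submodule.span F {a, b} := (submodule_le_iff p _).1 hp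
  obtain ⟨α, β, hαβ⟩ := Submodule.mem_span_pair.1 hrep
  by_cases hα : α = 0
  · left
    conv_lhs => rw [← p.mk_rep]
    rw [Projectivization.mk_eq_mk_iff']
    refine ⟨β, ?_⟩
    rw [← hαβ, hα, zero_smul, zero_add]
  · right
    refine ⟨β / α, ?_⟩
    conv_lhs => rw [← p.mk_rep]
    rw [Projectivization.mk_eq_mk_iff']
    refine ⟨α, ?_⟩
    rw [← hαβ, smul_add, smul_smul, mul_div_cancel₀ _ hα]

lemma lineSet_ncard (hF : Fintype.card F = q ^ 2) {W : Submodule F (Fin 3 → F)}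
    (hW2 : Module.finrank F W = 2) : (lineSet F 2 W).ncard = q ^ 2 + 1 := by
  obtain ⟨a, b, hab, hspan⟩ := exists_basis_of_finrank_two hW2
  have hset : lineSet F 2 W = insert (Projectivization.mk F b (pair_snd_ne_zero hab))
      (Set.range fun s : F => Projectivization.mk F (a + s • b) (pair_comb_ne_zero hab s)) := by
    ext p
    constructor
    · intro hp
      rcases point_on_line hab (le_of_le_of_eq (show p.submodule ≤ W from hp) hspan.symm) with h | ⟨s, h⟩
      · exact Set.mem_insert_iff.2 (Or.inl h)
      · exact Set.mem_insert_iff.2 (Or.inr ⟨s, h.symm⟩)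
    · intro hp
      rcases Set.mem_insert_iff.1 hp with rfl | ⟨s, rfl⟩
      · show Projectivization.submodule _ ≤ W
        rw [Projectivization.submodule_mk, Submodule.span_singleton_le_iff_mem, ← hspan]
        exact Submodule.subset_span (by simp)
      · show Projectivization.submodule _ ≤ W
        rw [Projectivization.submodule_mk, Submodule.span_singleton_le_iff_mem, ← hspan]
        exact Submodule.mem_span_pair.2 ⟨1, s, by rw [one_smul]⟩
  rw [hset]
  have hnot : Projectivization.mk F b (pair_snd_ne_zero hab) ∉
      Set.range fun s : F => Projectivization.mk F (a + s • b) (pair_comb_ne_zero hab s) := by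
    rintro ⟨s, hs⟩
    exact mk_snd_ne_param hab s hs.symm
  rw [Set.ncard_insert_of_notMem hnot (Set.toFinite _)]
  have hrange : (Set.range fun s : F =>
      Projectivization.mk F (a + s • b) (pair_comb_ne_zero hab s)).ncard = q ^ 2 := by
    rw [← Set.image_univ, Set.ncard_image_of_injective _ (fun s s' hss => ?_), Set.ncard_univ,
      Nat.card_eq_fintype_card, hF]
    by_contra hne
    exact mk_param_inj hab hne hss
  rw [hrange]

lemma lineVerts_ncard (hF : Fintype.card F = q ^ 2) {W : Submodule F (Fin 3 → F)}
    (hT : IsTangent F q 2 W) : (lineVerts F q 2 W).ncard = q ^ 2 := by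
  have himg : Subtype.val '' (lineVerts F q 2 W) = lineSet F 2 W \ Herm F q 2 := by
    ext p
    constructor
    · rintro ⟨u, hu, rfl⟩
      exact ⟨hu, u.2⟩
    · rintro ⟨h1, h2⟩
      exact ⟨⟨p, h2⟩, h1, rfl⟩
  have h1 : (lineVerts F q 2 W).ncard = (lineSet F 2 W \ Herm F q 2).ncard := by
    rw [← himg, Set.ncard_image_of_injective _ Subtype.val_injective]
  have h2 : lineSet F 2 W \ Herm F q 2 = lineSet F 2 W \ (lineSet F 2 W ∩ Herm F q 2) := by
    rw [Set.inter_comm, Set.diff_inter_self_eq_diff]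
  have h3 : (lineSet F 2 W \ (lineSet F 2 W ∩ Herm F q 2)).ncard =
      (lineSet F 2 W).ncard - (lineSet F 2 W ∩ Herm F q 2).ncard :=
    Set.ncard_diff Set.inter_subset_left (Set.toFinite _)
  rw [h1, h2, h3, hT.2, lineSet_ncard hF hT.1]
  omega

/-! ### Norm surjectivity -/

lemma norm_two_preimages (hF : Fintype.card F = q ^ 2) (hq3 : 3 ≤ q) {ρ : F}
    (h0 : ρ ≠ 0) (hqfix : ρ ^ q = ρ) :
    ∃ x y : F, x ≠ y ∧ x ^ (q + 1) = ρ ∧ y ^ (q + 1) = ρ := by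
  classical
  obtain ⟨g, hg⟩ := IsCyclic.exists_generator (α := Fˣ)
  have hcard : Fintype.card Fˣ = q ^ 2 - 1 := by rw [Fintype.card_units, hF]
  have horder : orderOf g = q ^ 2 - 1 := by
    rw [orderOf_eq_card_of_forall_mem_zpowers hg, Nat.card_eq_fintype_card, hcard]
  have hsq : q ^ 2 = q * q := by ring
  set u : Fˣ := Units.mk0 ρ h0 with hu
  obtain ⟨m, hm0⟩ : u ∈ Submonoid.powers g := mem_powers_iff_mem_zpowers.2 (hg u)
  have hm : g ^ m = u := hm0
  have hu1 : u ^ (q - 1) = 1 := by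
    have hρ1 : ρ ^ (q - 1) * ρ = ρ := by
      rw [← pow_succ]
      have he : q - 1 + 1 = q := by omega
      rw [he, hqfix]
    have hρ : ρ ^ (q - 1) = 1 := by
      field_simp at hρ1
      exact hρ1
    ext
    rw [Units.val_pow_eq_pow_val]
    simpa [hu] using hρ
  have hdvd : (q ^ 2 - 1) ∣ m * (q - 1) := by
    rw [← horder]
    apply orderOf_dvd_of_pow_eq_one
    rw [pow_mul, hm, hu1]
  have hfac : q ^ 2 - 1 = (q + 1) * (q - 1) := by
    obtain ⟨n, rfl⟩ : ∃ n, q = n + 1 := ⟨q - 1, by omega⟩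
    have h1 : (n + 1) ^ 2 = n * n + 2 * n + 1 := by ring
    have h2 : (n + 1 + 1) * (n + 1 - 1) = n * n + 2 * n := by
      have h3 : n + 1 - 1 = n := by omega
      rw [h3]
      ring
    omega
  have hqdvd : (q + 1) ∣ m := by
    have h2 : (q + 1) * (q - 1) ∣ m * (q - 1) := hfac ▸ hdvd
    have hq1 : 0 < q - 1 := by omega
    exact (Nat.mul_dvd_mul_iff_right hq1).1 h2
  obtain ⟨k, hk⟩ := hqdvd
  have hx : (g ^ k) ^ (q + 1) = u := by
    rw [← pow_mul, mul_comm k (q + 1), ← hk, hm]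
  have hz1 : g ^ (q - 1) ≠ 1 := by
    intro h
    have hd := orderOf_dvd_of_pow_eq_one h
    rw [horder] at hd
    have hle := Nat.le_of_dvd (by omega) hd
    have h3q : 3 * q ≤ q * q := Nat.mul_le_mul_right q hq3
    omega
  have hz : (g ^ (q - 1)) ^ (q + 1) = 1 := by
    rw [← pow_mul]
    have he : (q - 1) * (q + 1) = q ^ 2 - 1 := by rw [hfac]; ring
    rw [he, ← horder, pow_orderOf_eq_one]
  refine ⟨((g ^ k : Fˣ) : F), ((g ^ k * g ^ (q - 1) : Fˣ) : F), ?_, ?_, ?_⟩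
  · intro h
    apply hz1
    have hxz : (g ^ k : Fˣ) = g ^ k * g ^ (q - 1) := Units.ext h
    exact (mul_eq_left.1 hxz.symm)
  · rw [← Units.val_pow_eq_pow_val, hx]
    rfl
  · rw [← Units.val_pow_eq_pow_val, mul_pow, hx, hz, mul_one]
    rfl

/-! ### Tangency and the Gram condition -/

lemma gram_of_tangent (hfrob : ∀ x y : F, (x + y) ^ q = x ^ q + y ^ q)
    (hF : Fintype.card F = q ^ 2) (hq3 : 3 ≤ q)
    {a b : Fin 3 → F} (hab : LinearIndependent F ![a, b]) (hbb : hform q b b ≠ 0)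
    (ht : IsTangent F q 2 (Submodule.span F {a, b})) :
    hform q a a * hform q b b = (hform q a b) ^ (q + 1) := by
  by_contra hg
  set z := hform q a b with hz
  set w := hform q b b with hw
  set c : F := z / w with hc
  have hwq : w ^ q = w := hform_self_powq hfrob hF b
  have hzq : hform q b a = z ^ q := hform_conj hfrob hF a b
  set ρ : F := (z ^ q * z - hform q a a * w) / w ^ 2 with hρ
  have hρ0 : ρ ≠ 0 := by
    rw [hρ]
    apply div_ne_zero _ (pow_ne_zero _ hbb)
    intro h
    apply hg
    have h1 := sub_eq_zero.1 h
    rw [pow_succ, ← h1]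
  have hρq : ρ ^ q = ρ := by
    rw [hρ, div_pow, sub_powq hfrob, mul_pow, mul_pow, powq_powq hF z, hwq,
      hform_self_powq hfrob hF a, ← pow_mul, mul_comm 2 q, pow_mul, hwq]
    ring
  obtain ⟨x1, x2, hx12, hN1, hN2⟩ := norm_two_preimages hF hq3 hρ0 hρq
  have hcq : c ^ q = z ^ q / w := by rw [hc, div_pow, hwq]
  have hexp : ∀ s : F, hform q (a + s • b) (a + s • b) = ((s + c) ^ q * (s + c) - ρ) * w := by
    intro s
    rw [hform_comb hfrob, hfrob s c, hcq, hρ, hc, hzq]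
    field_simp
    ring
  have hmem : ∀ x : F, x ^ (q + 1) = ρ →
      Projectivization.mk F (a + (x - c) • b) (pair_comb_ne_zero hab (x - c)) ∈
        lineSet F 2 (Submodule.span F {a, b}) ∩ Herm F q 2 := by
    intro x hxρ
    constructor
    · show Projectivization.submodule _ ≤ _
      rw [Projectivization.submodule_mk, Submodule.span_singleton_le_iff_mem]
      exact Submodule.mem_span_pair.2 ⟨1, x - c, by rw [one_smul]⟩
    · rw [herm_mk (by omega)]
      rw [hexp, sub_add_cancel, ← pow_succ, hxρ, sub_self, zero_mul]
  obtain ⟨pt, hpt⟩ := Set.ncard_eq_one.1 ht.2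
  have h1 := hmem x1 hN1
  have h2 := hmem x2 hN2
  rw [hpt, Set.mem_singleton_iff] at h1 h2
  have hs12 : x1 - c ≠ x2 - c := fun h => hx12 (sub_left_inj.1 h)
  exact mk_param_inj hab hs12 (h1.trans h2.symm)

lemma hform_sub_right (hfrob : ∀ x y : F, (x + y) ^ q = x ^ q + y ^ q) (x y z : Fin 3 → F) :
    hform q x (y - z) = hform q x y - hform q x z := by
  simp only [hform, Pi.sub_apply, sub_powq hfrob, mul_sub, Finset.sum_sub_distrib]

/-- Facts about the tangency point `t = a - c • b` of a tangent line. -/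
lemma tangent_facts (hfrob : ∀ x y : F, (x + y) ^ q = x ^ q + y ^ q)
    (hF : Fintype.card F = q ^ 2) (hq0 : q ≠ 0) {a b : Fin 3 → F}
    (hab : LinearIndependent F ![a, b]) (hbb : hform q b b ≠ 0)
    (hgram : hform q a a * hform q b b = (hform q a b) ^ (q + 1)) :
    a - (hform q a b / hform q b b) • b ≠ 0 ∧
    hform q (a - (hform q a b / hform q b b) • b) b = 0 ∧
    hform q (a - (hform q a b / hform q b b) • b) a = 0 ∧
    hform q (a - (hform q a b / hform q b b) • b) (a - (hform q a b / hform q b b) • b) = 0 ∧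
    hform q b (a - (hform q a b / hform q b b) • b) = 0 ∧
    hform q a (a - (hform q a b / hform q b b) • b) = 0 ∧
    LinearIndependent F ![b, a - (hform q a b / hform q b b) • b] ∧
    Submodule.span F {a, b} = Submodule.span F {b, a - (hform q a b / hform q b b) • b} := by
  have hzq : hform q b a = (hform q a b) ^ q := hform_conj hfrob hF a b
  have hwq : (hform q b b) ^ q = hform q b b := hform_self_powq hfrob hF b
  rw [pow_succ] at hgram
  set c : F := hform q a b / hform q b b with hc
  set t : Fin 3 → F := a - c • b with htdef
  have ht0 : t ≠ 0 := by
    intro h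
    have h1 : (1 : F) • a + (-c) • b = 0 := by
      rw [one_smul, neg_smul, ← sub_eq_add_neg, ← htdef]
      exact h
    have := (LinearIndependent.pair_iff.1 hab 1 (-c) h1).1
    simp at this
  have htb : hform q t b = 0 := by
    rw [htdef, hform_sub_left, hform_smul_left, hc]
    field_simp
    ring
  have hta : hform q t a = 0 := by
    rw [htdef, hform_sub_left, hform_smul_left, hc, hzq]
    field_simp
    linear_combination hgram
  have htt : hform q t t = 0 := by
    conv_lhs => rw [htdef]
    rw [hform_sub_right hfrob, hform_smul_right, hform_sub_left, hform_sub_left,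
      hform_smul_left, hform_smul_left, hzq, hc, div_pow, hwq]
    field_simp
    linear_combination hgram
  have hbt : hform q b t = 0 := by
    rw [hform_conj hfrob hF t b, htb, zero_pow hq0]
  have hat : hform q a t = 0 := by
    rw [hform_conj hfrob hF t a, hta, zero_pow hq0]
  have hindep : LinearIndependent F ![b, t] := by
    rw [LinearIndependent.pair_iff]
    intro s r hsr
    have key : r • a + (s - r * c) • b = s • b + r • (a - c • b) := by module
    rw [← htdef, hsr] at key
    obtain ⟨h1, h2⟩ := LinearIndependent.pair_iff.1 hab _ _ key
    rw [h1, zero_mul, sub_zero] at h2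
    exact ⟨h2, h1⟩
  have hspan : Submodule.span F {a, b} = Submodule.span F {b, t} := by
    apply le_antisymm
    · rw [Submodule.span_le]
      rintro x (rfl | rfl)
      · exact Submodule.mem_span_pair.2 ⟨c, 1, by rw [htdef]; module⟩
      · exact Submodule.subset_span (by simp)
    · rw [Submodule.span_le]
      rintro x (rfl | rfl)
      · exact Submodule.subset_span (by simp)
      · exact Submodule.mem_span_pair.2 ⟨1, -c, by rw [htdef]; module⟩
  exact ⟨ht0, htb, hta, htt, hbt, hat, hindep, hspan⟩

lemma indep_noniso_iso (hq0 : q ≠ 0) {v t : Fin 3 → F} (hv : hform q v v ≠ 0)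
    (htt : hform q t t = 0) (ht0 : t ≠ 0) : LinearIndependent F ![v, t] := by
  rw [LinearIndependent.pair_iff]
  intro s r hsr
  rcases eq_or_ne r 0 with rfl | hr
  · rw [zero_smul, add_zero, smul_eq_zero] at hsr
    refine ⟨hsr.resolve_right fun h0 => hv ?_, rfl⟩
    rw [h0]
    simp [hform]
  · exfalso
    have h1 : r • t = -(s • v) := eq_neg_of_add_eq_zero_right hsr
    have h2 : t = (-s / r) • v := by
      have h3 : r⁻¹ • (r • t) = r⁻¹ • (-(s • v)) := by rw [h1]
      rw [smul_smul, inv_mul_cancel₀ hr, one_smul, smul_neg, smul_smul] at h3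
      rw [h3, ← neg_smul]
      congr 1
      field_simp
    rcases eq_or_ne (-s / r) 0 with h4 | h4
    · rw [h4, zero_smul] at h2
      exact ht0 h2
    · have h5 := htt
      rw [h2, hform_smul_left, hform_smul_right] at h5
      rcases mul_eq_zero.1 h5 with h6 | h6
      · exact h4 h6
      rcases mul_eq_zero.1 h6 with h7 | h7
      · exact h4 (pow_eq_zero_iff hq0 |>.1 h7)
      · exact hv h7

lemma iso_points_bound (hfrob : ∀ x y : F, (x + y) ^ q = x ^ q + y ^ q)
    (hF : Fintype.card F = q ^ 2) (hq3 : 3 ≤ q) {V : Submodule F (Fin 3 → F)}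
    (hV : Module.finrank F V = 2) :
    {p : PG F 2 | p.submodule ≤ V ∧ p ∈ Herm F q 2}.ncard ≤ q + 2 := by
  classical
  have hq0 : q ≠ 0 := by omega
  obtain ⟨a, b, hab, hspan⟩ := exists_basis_of_finrank_two hV
  set P : Polynomial F := Polynomial.C (hform q a a) +
      Polynomial.C (hform q b a) * Polynomial.X ^ 1 +
      Polynomial.C (hform q a b) * Polynomial.X ^ q +
      Polynomial.C (hform q b b) * Polynomial.X ^ (q + 1) with hPdef
  have hPeval : ∀ s : F, P.eval s = hform q (a + s • b) (a + s • b) := by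
    intro s
    rw [hform_comb hfrob]
    simp only [hPdef, Polynomial.eval_add, Polynomial.eval_mul, Polynomial.eval_pow,
      Polynomial.eval_C, Polynomial.eval_X]
    rw [pow_succ]
    ring
  have hPne : P ≠ 0 := by
    intro h0
    have hco := Polynomial.ext_iff.1 h0
    have c0 : hform q a a = 0 := by
      have h := hco 0
      simpa [hPdef, Polynomial.coeff_add, Polynomial.coeff_C_mul, Polynomial.coeff_X_pow,
        Polynomial.coeff_C, (show ¬(0 = q) by omega), (show ¬((0 : ℕ) = q + 1) by omega)] using h
    have c1 : hform q b a = 0 := by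
      have h := hco 1
      simpa [hPdef, Polynomial.coeff_add, Polynomial.coeff_C_mul, Polynomial.coeff_X_pow,
        Polynomial.coeff_C, hq0, (show ¬((1 : ℕ) = q) by omega),
        (show ¬((1 : ℕ) = q + 1) by omega)] using h
    have cq : hform q a b = 0 := by
      have h := hco q
      simpa [hPdef, Polynomial.coeff_add, Polynomial.coeff_C_mul, Polynomial.coeff_X_pow,
        Polynomial.coeff_X, Polynomial.coeff_C, hq0, (show ¬(q = 1) by omega),
        (show ¬((1:ℕ) = q) by omega), (show ¬(q = q + 1) by omega)] using h
    have cq1 : hform q b b = 0 := by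
      have h := hco (q + 1)
      simpa [hPdef, Polynomial.coeff_add, Polynomial.coeff_C_mul, Polynomial.coeff_X_pow,
        Polynomial.coeff_X, Polynomial.coeff_C, hq0, (show ¬(q + 1 = 1) by omega),
        (show ¬((1:ℕ) = q + 1) by omega), (show ¬(q + 1 = q) by omega)] using h
    have hU := finrank_inf_ker hfrob hF hq0 hab
    have hle : Submodule.span F {a, b} ≤ LinearMap.ker (phiF q a) ⊓ LinearMap.ker (phiF q b) := by
      rw [Submodule.span_le]
      rintro x (rfl | rfl)
      · exact Submodule.mem_inf.2 ⟨LinearMap.mem_ker.2 (by rw [phiF_apply]; exact c0),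
          LinearMap.mem_ker.2 (by rw [phiF_apply]; exact cq)⟩
      · exact Submodule.mem_inf.2 ⟨LinearMap.mem_ker.2 (by rw [phiF_apply]; exact c1),
          LinearMap.mem_ker.2 (by rw [phiF_apply]; exact cq1)⟩
    have hmono := Submodule.finrank_mono hle
    rw [finrank_span_pair hab, hU] at hmono
    omega
  have hsubset : {p : PG F 2 | p.submodule ≤ V ∧ p ∈ Herm F q 2} ⊆
      insert (Projectivization.mk F b (pair_snd_ne_zero hab))
        ((fun s => Projectivization.mk F (a + s • b) (pair_comb_ne_zero hab s)) ''
          {s : F | Polynomial.eval s P = 0}) := by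
    rintro p ⟨hpV, hpH⟩
    rcases point_on_line hab (le_of_le_of_eq hpV hspan.symm) with h | ⟨s, h⟩
    · exact Set.mem_insert_iff.2 (Or.inl h)
    · refine Set.mem_insert_iff.2 (Or.inr ⟨s, ?_, h.symm⟩)
      rw [Set.mem_setOf_eq, hPeval]
      rw [h] at hpH
      exact (herm_mk hq0 _ _).1 hpH
  calc {p : PG F 2 | p.submodule ≤ V ∧ p ∈ Herm F q 2}.ncard
      ≤ (insert (Projectivization.mk F b (pair_snd_ne_zero hab))
        ((fun s => Projectivization.mk F (a + s • b) (pair_comb_ne_zero hab s)) ''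
          {s : F | Polynomial.eval s P = 0})).ncard :=
        Set.ncard_le_ncard hsubset (Set.toFinite _)
    _ ≤ ((fun s => Projectivization.mk F (a + s • b) (pair_comb_ne_zero hab s)) ''
          {s : F | Polynomial.eval s P = 0}).ncard + 1 := Set.ncard_insert_le _ _
    _ ≤ {s : F | Polynomial.eval s P = 0}.ncard + 1 :=
        Nat.add_le_add_right (Set.ncard_image_le (Set.toFinite _)) 1
    _ ≤ P.natDegree + 1 := Nat.add_le_add_right (ncard_roots_le P hPne) 1
    _ ≤ q + 2 := by
        have hdeg : P.natDegree ≤ q + 1 := by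
          rw [hPdef]
          refine le_trans (Polynomial.natDegree_add_le _ _) ?_
          rw [max_le_iff]
          constructor
          · refine le_trans (Polynomial.natDegree_add_le _ _) ?_
            rw [max_le_iff]
            constructor
            · refine le_trans (Polynomial.natDegree_add_le _ _) ?_
              rw [max_le_iff]
              constructor
              · exact le_trans (le_of_eq (Polynomial.natDegree_C _)) (by omega)
              · exact le_trans (Polynomial.natDegree_C_mul_X_pow_le _ _) (by omega)
            · exact le_trans (Polynomial.natDegree_C_mul_X_pow_le _ _) (by omega)
          · exact Polynomial.natDegree_C_mul_X_pow_le _ _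
        omega

/-- Two distinct norm-circles on an affine line meet in at most two points. -/
lemma circle_inter_card (hfrob : ∀ x y : F, (x + y) ^ q = x ^ q + y ^ q)
    (hF : Fintype.card F = q ^ 2) {c c' ρ ρ' : F} (hne : ¬(c = c' ∧ ρ = ρ')) :
    {s : F | (s + c) ^ q * (s + c) = ρ ∧ (s + c') ^ q * (s + c') = ρ'}.ncard ≤ 2 := by
  classical
  set T := {s : F | (s + c) ^ q * (s + c) = ρ ∧ (s + c') ^ q * (s + c') = ρ'} with hTdef
  rcases eq_or_ne c c' with rfl | hcc
  · have hρρ : ρ ≠ ρ' := fun h => hne ⟨rfl, h⟩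
    have hTe : T = ∅ := by
      ext s
      simp only [hTdef, Set.mem_setOf_eq, Set.mem_empty_iff_false, iff_false, not_and]
      intro h1 h2
      exact hρρ (h1.symm.trans h2)
    rw [hTe]
    simp
  rcases eq_or_ne T ∅ with hTe | hTne
  · rw [hTe]
    simp
  obtain ⟨s₀, hs₀⟩ := Set.nonempty_iff_ne_empty.2 hTne
  by_cases hone : ∀ s ∈ T, s = s₀
  · have hsub : T ⊆ {s₀} := fun s hs => hone s hs
    exact le_trans (Set.ncard_le_ncard hsub (Set.toFinite _)) (by simp)
  push_neg at hone
  obtain ⟨s₁, hs₁T, hs₁⟩ := hone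
  set e := c - c' with he
  have he0 : e ≠ 0 := sub_ne_zero.2 hcc
  have heq : e ^ q = c ^ q - c' ^ q := sub_powq hfrob c c'
  have hlin : ∀ s ∈ T, e ^ q * (s - s₀) + e * (s ^ q - s₀ ^ q) = 0 := by
    intro s hs
    obtain ⟨h1, h2⟩ := hs
    obtain ⟨g1, g2⟩ := hs₀
    rw [hfrob] at h1 h2 g1 g2
    rw [heq, he]
    linear_combination h1 - h2 - g1 + g2
  have hK : ∀ s ∈ T, (e ^ q * (s - s₀)) ^ q = -(e ^ q * (s - s₀)) := by
    intro s hs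
    rw [mul_pow, powq_powq hF, sub_powq hfrob]
    linear_combination hlin s hs
  set θ := s₁ - s₀ with hθ
  have hθ0 : θ ≠ 0 := sub_ne_zero.2 hs₁
  have hθK : (e ^ q * θ) ^ q = -(e ^ q * θ) := hK s₁ hs₁T
  have htq : ∀ s ∈ T, ((s - s₀) / θ) ^ q = (s - s₀) / θ := by
    intro s hs
    have h1 : (s - s₀) / θ = (e ^ q * (s - s₀)) / (e ^ q * θ) := by
      rw [mul_div_mul_left _ _ (pow_ne_zero _ he0)]
    rw [h1, div_pow, hK s hs, hθK, neg_div_neg_eq]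
  set P : Polynomial F := Polynomial.C (θ ^ q * θ) * Polynomial.X ^ 2 +
      Polynomial.C ((s₀ + c) * θ ^ q + θ * (s₀ + c) ^ q) * Polynomial.X ^ 1 +
      Polynomial.C ((s₀ + c) ^ q * (s₀ + c) - ρ) with hPdef
  have hPne : P ≠ 0 := by
    intro h0
    have h := Polynomial.ext_iff.1 h0 2
    simp only [hPdef, Polynomial.coeff_add, Polynomial.coeff_C_mul, Polynomial.coeff_X_pow,
      Polynomial.coeff_C, Polynomial.coeff_zero] at h
    norm_num at h
    rcases h with ⟨h, -⟩ | h <;> exact hθ0 h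
  have hroot : ∀ s ∈ T, Polynomial.eval ((s - s₀) / θ) P = 0 := by
    intro s hs
    have htq' := htq s hs
    have hsrw : s + c = (s₀ + c) + ((s - s₀) / θ) * θ := by
      rw [div_mul_cancel₀ _ hθ0]
      ring
    have h1 := hs.1
    rw [hsrw, hfrob, mul_pow, htq'] at h1
    simp only [hPdef, Polynomial.eval_add, Polynomial.eval_mul, Polynomial.eval_pow,
      Polynomial.eval_C, Polynomial.eval_X]
    linear_combination h1
  have hinj : Set.InjOn (fun s => (s - s₀) / θ) T := by
    intro x hx y hy hxy
    simp only at hxy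
    field_simp [hθ0] at hxy
    exact sub_left_inj.1 hxy
  calc T.ncard ≤ {t : F | Polynomial.eval t P = 0}.ncard :=
        Set.ncard_le_ncard_of_injOn _ (fun s hs => hroot s hs) hinj (Set.toFinite _)
    _ ≤ P.natDegree := ncard_roots_le P hPne
    _ ≤ 2 := by
        refine le_trans (Polynomial.natDegree_add_le _ _) ?_
        rw [max_le_iff]
        constructor
        · refine le_trans (Polynomial.natDegree_add_le _ _) ?_
          rw [max_le_iff]
          exact ⟨Polynomial.natDegree_C_mul_X_pow_le _ _,
            le_trans (Polynomial.natDegree_C_mul_X_pow_le _ _) (by omega)⟩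
        · exact le_trans (le_of_eq (Polynomial.natDegree_C _)) (by omega)

/-- The key computation transforming the Gram condition into a circle equation. -/
lemma key_circle (hfrob : ∀ x y : F, (x + y) ^ q = x ^ q + y ^ q)
    (hF : Fintype.card F = q ^ 2) {b t vv : Fin 3 → F} (lam s : F)
    (hlam0 : lam ≠ 0)
    (hbb : hform q b b ≠ 0) (hB : hform q vv t ≠ 0)
    (htb : hform q t b = 0) (hbt : hform q b t = 0) (htt : hform q t t = 0)
    (hgram2 : hform q vv vv * hform q (lam • (b + s • t)) (lam • (b + s • t)) =
      (hform q vv (lam • (b + s • t))) ^ (q + 1)) :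
    (s + (hform q vv b / hform q vv t) ^ q) ^ q * (s + (hform q vv b / hform q vv t) ^ q) =
      hform q vv vv * hform q b b / (hform q vv t) ^ q / hform q vv t := by
  set A := hform q vv b with hA
  set B := hform q vv t with hBd
  set w := hform q b b with hw
  set gv := hform q vv vv with hgv
  have hline : hform q (b + s • t) (b + s • t) = w := by
    rw [hform_comb hfrob, htb, hbt, htt]
    ring
  have hvx : hform q vv (b + s • t) = A + s ^ q * B := by
    rw [hform_add_right hfrob, hform_smul_right]
  have h1 : hform q (lam • (b + s • t)) (lam • (b + s • t)) = lam * (lam ^ q * w) := by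
    rw [hform_smul_left, hform_smul_right, hline]
  have h2 : hform q vv (lam • (b + s • t)) = lam ^ q * (A + s ^ q * B) := by
    rw [hform_smul_right, hvx]
  rw [h1, h2] at hgram2
  have hexp : (lam ^ q * (A + s ^ q * B)) ^ (q + 1) =
      (lam * lam ^ q) * ((A ^ q + s * B ^ q) * (A + s ^ q * B)) := by
    rw [pow_succ, mul_pow, powq_powq hF lam, hfrob, mul_pow, powq_powq hF s]
    ring
  rw [hexp] at hgram2
  have hcan : gv * w = (A ^ q + s * B ^ q) * (A + s ^ q * B) := by
    have hlam2 : lam * lam ^ q ≠ 0 := mul_ne_zero hlam0 (pow_ne_zero _ hlam0)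
    apply mul_left_cancel₀ hlam2
    linear_combination hgram2
  rw [hfrob s ((A / B) ^ q), powq_powq hF (A / B), div_pow]
  field_simp
  linear_combination -hcan

lemma adj_iff' {u v : {p : PG F 2 // p ∉ Herm F q 2}} :
    (NU F q 2).Adj u v ↔ u ≠ v ∧ IsTangent F q 2 (Submodule.span F {u.1.rep, v.1.rep}) :=
  Iff.rfl

/-- The main geometric lemma: a clique of size `q^2` in `NU(3,q^2)` is collinear. -/
lemma clique_collinear (hfrob : ∀ x y : F, (x + y) ^ q = x ^ q + y ^ q)
    (hF : Fintype.card F = q ^ 2) (hq3 : 3 ≤ q)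
    (S : Set {p : PG F 2 // p ∉ Herm F q 2})
    (hclique : ∀ u ∈ S, ∀ v ∈ S, u ≠ v → (NU F q 2).Adj u v)
    (hcard : S.ncard = q ^ 2) :
    ∃ u ∈ S, ∃ v ∈ S, u ≠ v ∧
      ∀ w ∈ S, w.1.submodule ≤ Submodule.span F {u.1.rep, v.1.rep} := by
  classical
  have hq0 : q ≠ 0 := by omega
  have hsq : q ^ 2 = q * q := by ring
  have h3q : 3 * q ≤ q * q := Nat.mul_le_mul_right q hq3
  have hgr : ∀ u ∈ S, ∀ v ∈ S, u ≠ v →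
      hform q u.1.rep u.1.rep * hform q v.1.rep v.1.rep =
        (hform q u.1.rep v.1.rep) ^ (q + 1) := by
    intro u hu v hv huv
    have hadj := hclique u hu v hv huv
    exact gram_of_tangent hfrob hF hq3
      (indep_of_ne (fun h => huv (Subtype.ext h))) (vertex_noniso v) hadj.2
  by_cases hA : ∃ u ∈ S, ∃ v ∈ S, ∃ w ∈ S, u ≠ v ∧ u ≠ w ∧ v ≠ w ∧
      w.1.submodule ≤ Submodule.span F {u.1.rep, v.1.rep}
  · -- CASE A : three collinear points exist
    obtain ⟨u₁, hu₁, v₁, hv₁, w₁, hw₁, h12, h13, h23, hcol⟩ := hA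
    have hab : LinearIndependent F ![u₁.1.rep, v₁.1.rep] :=
      indep_of_ne (fun h => h12 (Subtype.ext h))
    have hgram := hgr u₁ hu₁ v₁ hv₁ h12
    obtain ⟨ht0, htb, hta, htt, hbt, hat, hmt, hspanbt⟩ :=
      tangent_facts hfrob hF hq0 hab (vertex_noniso v₁) hgram
    set a := u₁.1.rep with hadef
    set b := v₁.1.rep with hbdef
    set t : Fin 3 → F := a - (hform q a b / hform q b b) • b with htdef
    have hns : ∀ s : F, b + s • t ≠ 0 := fun s => pair_comb_ne_zero hmt s
    have hline : ∀ s : F, hform q (b + s • t) (b + s • t) = hform q b b := by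
      intro s
      rw [hform_comb hfrob, htb, hbt, htt]
      ring
    have hpar : ∀ u : {p : PG F 2 // p ∉ Herm F q 2},
        u.1.submodule ≤ Submodule.span F {a, b} →
        ∃ s : F, u.1 = Projectivization.mk F (b + s • t) (hns s) := by
      intro u hu
      rw [hspanbt] at hu
      rcases point_on_line hmt hu with h | ⟨s, h⟩
      · exfalso
        apply u.2
        rw [h, herm_mk hq0]
        exact htt
      · exact ⟨s, h⟩
    have hu₁line : u₁.1.submodule ≤ Submodule.span F {a, b} := by
      rw [submodule_le_iff]
      exact Submodule.subset_span (by simp [hadef])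
    have hv₁line : v₁.1.submodule ≤ Submodule.span F {a, b} := by
      rw [submodule_le_iff]
      exact Submodule.subset_span (by simp [hbdef])
    obtain ⟨s₁, hs₁⟩ := hpar u₁ hu₁line
    obtain ⟨s₂, hs₂⟩ := hpar v₁ hv₁line
    obtain ⟨s₃, hs₃⟩ := hpar w₁ hcol
    have hs12 : s₁ ≠ s₂ := by
      intro h
      exact h12 (Subtype.ext (by rw [hs₁, hs₂, h]))
    have hs13 : s₁ ≠ s₃ := by
      intro h
      exact h13 (Subtype.ext (by rw [hs₁, hs₃, h]))
    have hs23 : s₂ ≠ s₃ := by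
      intro h
      exact h23 (Subtype.ext (by rw [hs₂, hs₃, h]))
    by_cases hSin : ∀ w ∈ S, w.1.submodule ≤ Submodule.span F {a, b}
    · exact ⟨u₁, hu₁, v₁, hv₁, h12, hSin⟩
    exfalso
    push_neg at hSin
    obtain ⟨w, hwS, hwoff⟩ := hSin
    have hkert : LinearMap.ker (phiF q t) = Submodule.span F {a, b} := by
      have h1 : Submodule.span F {a, b} ≤ LinearMap.ker (phiF q t) := by
        rw [hspanbt, Submodule.span_le]
        rintro x (rfl | rfl)
        · exact LinearMap.mem_ker.2 (by rw [phiF_apply]; exact hbt)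
        · exact LinearMap.mem_ker.2 (by rw [phiF_apply]; exact htt)
      have h2 : Module.finrank F (LinearMap.ker (phiF q t)) = 2 :=
        finrank_ker_phiF hq0 ht0
      exact (Submodule.eq_of_le_of_finrank_le h1
        (by rw [h2, finrank_span_pair hab])).symm
    have hBne : ∀ u ∈ S, ¬ u.1.submodule ≤ Submodule.span F {a, b} →
        hform q u.1.rep t ≠ 0 := by
      intro u hu hoff hB0
      apply hoff
      rw [submodule_le_iff, ← hkert]
      exact LinearMap.mem_ker.2 (by rw [phiF_apply]; exact hB0)
    have hkey : ∀ u ∈ S, ¬ u.1.submodule ≤ Submodule.span F {a, b} →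
        ∀ x ∈ S, ∀ s : F, x.1 = Projectivization.mk F (b + s • t) (hns s) →
        (s + (hform q u.1.rep b / hform q u.1.rep t) ^ q) ^ q *
          (s + (hform q u.1.rep b / hform q u.1.rep t) ^ q) =
        hform q u.1.rep u.1.rep * hform q b b / (hform q u.1.rep t) ^ q /
          hform q u.1.rep t := by
      intro u hu hoff x hx s hxs
      have hne' : u ≠ x := by
        intro h
        apply hoff
        rw [h, hxs]
        show Projectivization.submodule _ ≤ _
        rw [Projectivization.submodule_mk, Submodule.span_singleton_le_iff_mem, hspanbt]
        exact Submodule.mem_span_pair.2 ⟨1, s, by rw [one_smul]⟩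
      have hgram2 := hgr u hu x hx hne'
      obtain ⟨lam, hlam0, hlam⟩ := rep_mk_smul (b + s • t) (hns s)
      have hxrep : x.1.rep = lam • (b + s • t) := by rw [hxs]; exact hlam
      rw [hxrep] at hgram2
      exact key_circle hfrob hF lam s hlam0 (vertex_noniso v₁) (hBne u hu hoff)
        htb hbt htt hgram2
    by_cases hsame : ∀ u, u ∈ S → ¬ u.1.submodule ≤ Submodule.span F {a, b} →
        ∀ u', u' ∈ S → ¬ u'.1.submodule ≤ Submodule.span F {a, b} →
        (hform q u.1.rep b / hform q u.1.rep t) ^ q =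
          (hform q u'.1.rep b / hform q u'.1.rep t) ^ q ∧
        hform q u.1.rep u.1.rep * hform q b b / (hform q u.1.rep t) ^ q /
            hform q u.1.rep t =
          hform q u'.1.rep u'.1.rep * hform q b b / (hform q u'.1.rep t) ^ q /
            hform q u'.1.rep t
    · -- all off-line points share the same circle: derive a contradiction
      -- first, bound the number of on-line points of S
      set pfun : {p : PG F 2 // p ∉ Herm F q 2} → F := fun u =>
        if h : ∃ s : F, u.1 = Projectivization.mk F (b + s • t) (hns s) then h.choose
        else 0 with hpf
      have hpfun : ∀ u ∈ S, u.1.submodule ≤ Submodule.span F {a, b} →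
          u.1 = Projectivization.mk F (b + pfun u • t) (hns _) := by
        intro u hu hcond
        have h := hpar u hcond
        rw [hpf]
        simp only [dif_pos h]
        exact h.choose_spec
      set P₃ : Polynomial F := (Polynomial.X +
          Polynomial.C ((hform q w.1.rep b / hform q w.1.rep t) ^ q)) ^ (q + 1) -
          Polynomial.C (hform q w.1.rep w.1.rep * hform q b b /
            (hform q w.1.rep t) ^ q / hform q w.1.rep t) with hP₃
      have hP₃ne : P₃ ≠ 0 := by
        intro h0
        rw [hP₃, sub_eq_zero] at h0
        have h2 := congrArg Polynomial.natDegree h0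
        rw [Polynomial.natDegree_pow, Polynomial.natDegree_X_add_C,
          Polynomial.natDegree_C, mul_one] at h2
        omega
      have hP₃deg : P₃.natDegree ≤ q + 1 := by
        rw [hP₃]
        refine le_trans (Polynomial.natDegree_sub_le _ _) ?_
        rw [max_le_iff]
        constructor
        · rw [Polynomial.natDegree_pow, Polynomial.natDegree_X_add_C, mul_one]
        · rw [Polynomial.natDegree_C]
          omega
      have hSonle : {u | u ∈ S ∧ u.1.submodule ≤ Submodule.span F {a, b}}.ncard ≤ q + 1 := by
        have hmapsto : ∀ u ∈ {u | u ∈ S ∧ u.1.submodule ≤ Submodule.span F {a, b}},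
            pfun u ∈ {s : F | Polynomial.eval s P₃ = 0} := by
          rintro u ⟨huS, hcond⟩
          have hs := hpfun u huS hcond
          have hcirc := hkey w hwS hwoff u huS (pfun u) hs
          rw [Set.mem_setOf_eq, hP₃]
          simp only [Polynomial.eval_sub, Polynomial.eval_pow, Polynomial.eval_add,
            Polynomial.eval_X, Polynomial.eval_C]
          rw [pow_succ, hcirc, sub_self]
        have hinj : Set.InjOn pfun {u | u ∈ S ∧ u.1.submodule ≤ Submodule.span F {a, b}} := by
          rintro x ⟨hxS, hxc⟩ y ⟨hyS, hyc⟩ hxy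
          have h1 := hpfun x hxS hxc
          have h2 := hpfun y hyS hyc
          apply Subtype.ext
          rw [h1, h2, hxy]
        calc {u | u ∈ S ∧ u.1.submodule ≤ Submodule.span F {a, b}}.ncard
            ≤ {s : F | Polynomial.eval s P₃ = 0}.ncard :=
              Set.ncard_le_ncard_of_injOn pfun hmapsto hinj (Set.toFinite _)
          _ ≤ P₃.natDegree := ncard_roots_le P₃ hP₃ne
          _ ≤ q + 1 := hP₃deg
      -- hence there are at least two off-line points
      have hsplit : {u | u ∈ S ∧ ¬ u.1.submodule ≤ Submodule.span F {a, b}} =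
          S \ {u | u ∈ S ∧ u.1.submodule ≤ Submodule.span F {a, b}} := by
        ext u
        simp only [Set.mem_setOf_eq, Set.mem_diff]
        tauto
      have hSonsub : {u | u ∈ S ∧ u.1.submodule ≤ Submodule.span F {a, b}} ⊆ S :=
        fun u hu => hu.1
      have hoffcard : {u | u ∈ S ∧ ¬ u.1.submodule ≤ Submodule.span F {a, b}}.ncard =
          S.ncard - {u | u ∈ S ∧ u.1.submodule ≤ Submodule.span F {a, b}}.ncard := by
        rw [hsplit]
        exact Set.ncard_diff hSonsub (Set.toFinite _)
      have hoff2 : 1 < {u | u ∈ S ∧ ¬ u.1.submodule ≤ Submodule.span F {a, b}}.ncard := by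
        rw [hoffcard, hcard]
        omega
      obtain ⟨x, hx, y, hy, hxy⟩ := (Set.one_lt_ncard (Set.toFinite _)).1 hoff2
      obtain ⟨hxS, hxoff⟩ := hx
      obtain ⟨hyS, hyoff⟩ := hy
      -- both lie on the polar line of z
      have hgram3 := hgr x hxS y hyS hxy
      have hxyind : LinearIndependent F ![x.1.rep, y.1.rep] :=
        indep_of_ne (fun h => hxy (Subtype.ext h))
      obtain ⟨ht'0, ht'b, ht'a, ht't, _, _, _, _⟩ :=
        tangent_facts hfrob hF hq0 hxyind (vertex_noniso y) hgram3
      set t' : Fin 3 → F := x.1.rep -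
        (hform q x.1.rep y.1.rep / hform q y.1.rep y.1.rep) • y.1.rep with ht'def
      set z : Fin 3 → F :=
        b + (-((hform q x.1.rep b / hform q x.1.rep t) ^ q)) • t with hzdef
      have hz0 : z ≠ 0 := hns _
      have hzz : hform q z z = hform q b b := hline _
      have hBx := hBne x hxS hxoff
      have hBy := hBne y hyS hyoff
      have hvz : hform q x.1.rep z = 0 := by
        rw [hzdef, hform_add_right hfrob, hform_smul_right, neg_powq hq0 hfrob,
          powq_powq hF]
        field_simp
        ring
      have hv'z : hform q y.1.rep z = 0 := by
        have hcc := (hsame x hxS hxoff y hyS hyoff).1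
        rw [hzdef, hform_add_right hfrob, hform_smul_right, neg_powq hq0 hfrob, hcc,
          powq_powq hF]
        field_simp
        ring
      have hU := finrank_inf_ker hfrob hF hq0 hxyind
      have ht'U : t' ∈ LinearMap.ker (phiF q x.1.rep) ⊓ LinearMap.ker (phiF q y.1.rep) :=
        Submodule.mem_inf.2 ⟨LinearMap.mem_ker.2 (by rw [phiF_apply]; exact ht'a),
          LinearMap.mem_ker.2 (by rw [phiF_apply]; exact ht'b)⟩
      have hzU : z ∈ LinearMap.ker (phiF q x.1.rep) ⊓ LinearMap.ker (phiF q y.1.rep) := by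
        refine Submodule.mem_inf.2 ⟨LinearMap.mem_ker.2 ?_, LinearMap.mem_ker.2 ?_⟩
        · rw [phiF_apply, hform_conj hfrob hF, hvz, zero_pow hq0]
        · rw [phiF_apply, hform_conj hfrob hF, hv'z, zero_pow hq0]
      obtain ⟨d, hd⟩ := eq_smul_of_finrank_one hU hzU hz0 ht'U
      have hcontr : hform q t' t' = d * (d ^ q * hform q b b) := by
        rw [hd, hform_smul_left, hform_smul_right, hzz]
      rw [ht't] at hcontr
      have hd0 : d = 0 := by
        rcases mul_eq_zero.1 hcontr.symm with h | h
        · exact h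
        rcases mul_eq_zero.1 h with h' | h'
        · exact pow_eq_zero_iff hq0 |>.1 h'
        · exact absurd h' (vertex_noniso v₁)
      rw [hd0, zero_smul] at hd
      exact ht'0 hd
    · -- two off-line points with different circles
      push_neg at hsame
      obtain ⟨x, hxS, hxoff, y, hyS, hyoff, hnexy⟩ := hsame
      set T := {s : F | (s + (hform q x.1.rep b / hform q x.1.rep t) ^ q) ^ q *
          (s + (hform q x.1.rep b / hform q x.1.rep t) ^ q) =
            hform q x.1.rep x.1.rep * hform q b b / (hform q x.1.rep t) ^ q /
              hform q x.1.rep t ∧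
          (s + (hform q y.1.rep b / hform q y.1.rep t) ^ q) ^ q *
          (s + (hform q y.1.rep b / hform q y.1.rep t) ^ q) =
            hform q y.1.rep y.1.rep * hform q b b / (hform q y.1.rep t) ^ q /
              hform q y.1.rep t} with hTdef
      have hT2 : T.ncard ≤ 2 := circle_inter_card hfrob hF (fun hh => hnexy hh.1 hh.2)
      have hmem : ∀ (u : {p : PG F 2 // p ∉ Herm F q 2}) (hu : u ∈ S) (s : F),
          u.1 = Projectivization.mk F (b + s • t) (hns s) → s ∈ T := by
        intro u hu s hus
        exact ⟨hkey x hxS hxoff u hu s hus, hkey y hyS hyoff u hu s hus⟩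
      have h3sub : {s₁, s₂, s₃} ⊆ T := by
        rintro s (rfl | rfl | rfl)
        · exact hmem u₁ hu₁ _ hs₁
        · exact hmem v₁ hv₁ _ hs₂
        · exact hmem w₁ hw₁ _ hs₃
      have h33 : ({s₁, s₂, s₃} : Set F).ncard = 3 := by
        rw [Set.ncard_insert_of_notMem (by simp [hs12, hs13]) (Set.toFinite _),
          Set.ncard_pair hs23]
      have := Set.ncard_le_ncard h3sub (Set.toFinite _)
      omega
  · -- CASE B : no three collinear points; counting contradiction
    exfalso
    push_neg at hA
    have hS0 : S.Nonempty := by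
      rw [← Set.ncard_pos (Set.toFinite _), hcard, hsq]
      omega
    obtain ⟨w₀, hw₀⟩ := hS0
    have hv₀ : w₀.1.rep ≠ 0 := Projectivization.rep_nonzero _
    have hVrank : Module.finrank F (LinearMap.ker (phiF q w₀.1.rep)) = 2 :=
      finrank_ker_phiF hq0 hv₀
    -- tangency-point map into isotropic points of the polar line of w₀
    set f : {p : PG F 2 // p ∉ Herm F q 2} → PG F 2 := fun u =>
      if h : w₀.1.rep - (hform q w₀.1.rep u.1.rep / hform q u.1.rep u.1.rep) • u.1.rep ≠ 0
      then Projectivization.mk F _ h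
      else Projectivization.mk F w₀.1.rep hv₀ with hfdef
    have hfacts : ∀ u ∈ S, u ≠ w₀ →
        (w₀.1.rep - (hform q w₀.1.rep u.1.rep / hform q u.1.rep u.1.rep) • u.1.rep ≠ 0) ∧
        LinearIndependent F ![w₀.1.rep, u.1.rep] := by
      intro u hu hne
      have hind : LinearIndependent F ![w₀.1.rep, u.1.rep] :=
        indep_of_ne (fun h => hne (Subtype.ext h.symm))
      have hgram := hgr w₀ hw₀ u hu (fun h => hne h.symm)
      obtain ⟨ht0, _, _, _, _, _, _, _⟩ :=
        tangent_facts hfrob hF hq0 hind (vertex_noniso u) hgram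
      exact ⟨ht0, hind⟩
    have hmapsto : ∀ u ∈ S \ {w₀},
        f u ∈ {p : PG F 2 | p.submodule ≤ LinearMap.ker (phiF q w₀.1.rep) ∧
          p ∈ Herm F q 2} := by
      rintro u ⟨hu, hune⟩
      rw [Set.mem_singleton_iff] at hune
      obtain ⟨ht0, hind⟩ := hfacts u hu hune
      have hgram := hgr w₀ hw₀ u hu (fun h => hune h.symm)
      obtain ⟨_, htb, hta, htt, _, _, _, _⟩ :=
        tangent_facts hfrob hF hq0 hind (vertex_noniso u) hgram
      have hfu : f u = Projectivization.mk F _ ht0 := by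
        rw [hfdef]
        simp only [dif_pos ht0]
      rw [hfu]
      constructor
      · show Projectivization.submodule _ ≤ _
        rw [Projectivization.submodule_mk, Submodule.span_singleton_le_iff_mem]
        exact LinearMap.mem_ker.2 (by rw [phiF_apply]; exact hta)
      · rw [herm_mk hq0]
        exact htt
    have hinj : Set.InjOn f (S \ {w₀}) := by
      rintro u ⟨hu, hune⟩ u' ⟨hu', hu'ne⟩ hff
      rw [Set.mem_singleton_iff] at hune hu'ne
      by_contra hneq
      obtain ⟨ht0, hind⟩ := hfacts u hu hune
      obtain ⟨ht0', hind'⟩ := hfacts u' hu' hu'ne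
      have hfu : f u = Projectivization.mk F _ ht0 := by
        rw [hfdef]; simp only [dif_pos ht0]
      have hfu' : f u' = Projectivization.mk F _ ht0' := by
        rw [hfdef]; simp only [dif_pos ht0']
      rw [hfu, hfu'] at hff
      rw [Projectivization.mk_eq_mk_iff'] at hff
      obtain ⟨d, hd⟩ := hff
      have hd0 : d ≠ 0 := by
        intro h
        rw [h, zero_smul] at hd
        exact ht0 hd.symm
      -- spans of the two tangent lines coincide
      have hgram := hgr w₀ hw₀ u hu (fun h => hune h.symm)
      obtain ⟨_, _, hta, htt, _, _, _, _⟩ :=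
        tangent_facts hfrob hF hq0 hind (vertex_noniso u) hgram
      have hindt : LinearIndependent F
          ![w₀.1.rep, w₀.1.rep -
            (hform q w₀.1.rep u.1.rep / hform q u.1.rep u.1.rep) • u.1.rep] :=
        indep_noniso_iso hq0 (vertex_noniso w₀) htt ht0
      have hsub1 : Submodule.span F
          {w₀.1.rep, w₀.1.rep -
            (hform q w₀.1.rep u.1.rep / hform q u.1.rep u.1.rep) • u.1.rep} ≤
          Submodule.span F {w₀.1.rep, u.1.rep} := by
        rw [Submodule.span_le]
        rintro v (rfl | rfl)
        · exact Submodule.subset_span (by simp)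
        · exact Submodule.mem_span_pair.2
            ⟨1, -(hform q w₀.1.rep u.1.rep / hform q u.1.rep u.1.rep), by module⟩
      have hspan1 : Submodule.span F
          {w₀.1.rep, w₀.1.rep -
            (hform q w₀.1.rep u.1.rep / hform q u.1.rep u.1.rep) • u.1.rep} =
          Submodule.span F {w₀.1.rep, u.1.rep} :=
        span_pair_eq hindt hsub1 (finrank_span_pair hind)
      have hsub2 : Submodule.span F
          {w₀.1.rep, w₀.1.rep -
            (hform q w₀.1.rep u'.1.rep / hform q u'.1.rep u'.1.rep) • u'.1.rep} ≤
          Submodule.span F {w₀.1.rep, u'.1.rep} := by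
        rw [Submodule.span_le]
        rintro v (rfl | rfl)
        · exact Submodule.subset_span (by simp)
        · exact Submodule.mem_span_pair.2
            ⟨1, -(hform q w₀.1.rep u'.1.rep / hform q u'.1.rep u'.1.rep), by module⟩
      have hgram' := hgr w₀ hw₀ u' hu' (fun h => hu'ne h.symm)
      obtain ⟨_, _, _, htt', _, _, _, _⟩ :=
        tangent_facts hfrob hF hq0 hind' (vertex_noniso u') hgram'
      have hindt' : LinearIndependent F
          ![w₀.1.rep, w₀.1.rep -
            (hform q w₀.1.rep u'.1.rep / hform q u'.1.rep u'.1.rep) • u'.1.rep] :=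
        indep_noniso_iso hq0 (vertex_noniso w₀) htt' ht0'
      have hspan2 : Submodule.span F
          {w₀.1.rep, w₀.1.rep -
            (hform q w₀.1.rep u'.1.rep / hform q u'.1.rep u'.1.rep) • u'.1.rep} =
          Submodule.span F {w₀.1.rep, u'.1.rep} :=
        span_pair_eq hindt' hsub2 (finrank_span_pair hind')
      -- now the two pair spans with tangency points are equal
      have hscal : Submodule.span F
          {w₀.1.rep, w₀.1.rep -
            (hform q w₀.1.rep u.1.rep / hform q u.1.rep u.1.rep) • u.1.rep} =
          Submodule.span F
          {w₀.1.rep, w₀.1.rep -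
            (hform q w₀.1.rep u'.1.rep / hform q u'.1.rep u'.1.rep) • u'.1.rep} := by
        apply le_antisymm
        · rw [Submodule.span_le]
          rintro v (rfl | rfl)
          · exact Submodule.subset_span (by simp)
          · rw [← hd]
            exact Submodule.smul_mem _ d (Submodule.subset_span (by simp))
        · rw [Submodule.span_le]
          rintro v (rfl | rfl)
          · exact Submodule.subset_span (by simp)
          · have : w₀.1.rep -
                (hform q w₀.1.rep u'.1.rep / hform q u'.1.rep u'.1.rep) • u'.1.rep =
                d⁻¹ • (w₀.1.rep -
                  (hform q w₀.1.rep u.1.rep / hform q u.1.rep u.1.rep) • u.1.rep) := by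
              rw [← hd, smul_smul, inv_mul_cancel₀ hd0, one_smul]
            rw [this]
            exact Submodule.smul_mem _ _ (Submodule.subset_span (by simp))
      have hWW : Submodule.span F {w₀.1.rep, u.1.rep} =
          Submodule.span F {w₀.1.rep, u'.1.rep} := by
        rw [← hspan1, ← hspan2, hscal]
      -- then w₀, u, u' are three distinct collinear points, contradicting hA
      apply hA w₀ hw₀ u hu u' hu' (fun h => hune h.symm) (fun h => hu'ne h.symm) hneq
      rw [hWW, submodule_le_iff]
      exact Submodule.subset_span (by simp)
    have hcard2 : (S \ {w₀}).ncard = q ^ 2 - 1 := by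
      rw [Set.ncard_diff_singleton_of_mem hw₀, hcard]
    have hle := Set.ncard_le_ncard_of_injOn f hmapsto hinj (Set.toFinite _)
    have hbound := iso_points_bound hfrob hF hq3 hVrank
    omega

end Aux

/-- For `q ≠ 2`, every automorphism of `NU(3,q^2)` maps the set of the `q^2`
non-isotropic points of a tangent line onto the set of non-isotropic points of some
tangent line. -/
theorem aut_maps_tangent_to_tangent (q : ℕ) (hq : IsPrimePow q) (hq2 : q ≠ 2)
    (hF : Fintype.card F = q ^ 2)
    (g : NU F q 2 ≃g NU F q 2)
    (W : Submodule F (Fin 3 → F)) (hW : IsTangent F q 2 W) :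
    ∃ W' : Submodule F (Fin 3 → F), IsTangent F q 2 W' ∧
      ⇑g '' lineVerts F q 2 W = lineVerts F q 2 W' := by
  classical
  have hq2le : 2 ≤ q := hq.two_le
  have hq3 : 3 ≤ q := by omega
  obtain ⟨p, k, hp, hk, hpk⟩ := hq
  have hpp : p.Prime := Nat.prime_iff.2 hp
  haveI : Fact p.Prime := ⟨hpp⟩
  haveI hrc : CharP F (ringChar F) := ringChar.charP F
  have hrprime : (ringChar F).Prime := CharP.char_is_prime F (ringChar F)
  obtain ⟨n, hrp, hcardr⟩ := FiniteField.card F (ringChar F)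
  have hpr : p = ringChar F := by
    have hdvd : p ∣ (ringChar F) ^ (n : ℕ) := by
      rw [← hcardr, hF, ← hpk, ← pow_mul]
      exact dvd_pow_self p (by positivity)
    have hpd : p ∣ ringChar F := hpp.dvd_of_dvd_pow hdvd
    exact (Nat.prime_dvd_prime_iff_eq hpp hrprime).1 hpd
  haveI hcharp : CharP F p := by rw [hpr]; exact hrc
  haveI : ExpChar F p := ExpChar.prime hpp
  have hfrob : ∀ x y : F, (x + y) ^ q = x ^ q + y ^ q := by
    intro x y
    rw [← hpk]
    exact add_pow_char_pow x y p k
  set S : Set {p' : PG F 2 // p' ∉ Herm F q 2} := ⇑g '' lineVerts F q 2 W with hSdef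
  have hlv_clique : ∀ u ∈ lineVerts F q 2 W, ∀ v ∈ lineVerts F q 2 W, u ≠ v →
      (NU F q 2).Adj u v := by
    intro u hu v hv huv
    refine ⟨huv, ?_⟩
    have hind : LinearIndependent F ![u.1.rep, v.1.rep] :=
      indep_of_ne (fun h => huv (Subtype.ext h))
    have hle : Submodule.span F {u.1.rep, v.1.rep} ≤ W := by
      rw [Submodule.span_le]
      rintro x (rfl | rfl)
      · exact (submodule_le_iff _ _).1 hu
      · exact (submodule_le_iff _ _).1 hv
    have hsp : Submodule.span F {u.1.rep, v.1.rep} = W := span_pair_eq hind hle hW.1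
    rw [hsp]
    exact hW
  have hg_inj : Function.Injective (⇑g) := g.toEquiv.injective
  have hSclique : ∀ u ∈ S, ∀ v ∈ S, u ≠ v → (NU F q 2).Adj u v := by
    rintro u' hu' v' hv' huv
    obtain ⟨u, hu, rfl⟩ := hu'
    obtain ⟨v, hv, rfl⟩ := hv'
    have hne : u ≠ v := fun h => huv (by rw [h])
    exact g.map_adj_iff.2 (hlv_clique u hu v hv hne)
  have hScard : S.ncard = q ^ 2 := by
    rw [hSdef, Set.ncard_image_of_injective _ hg_inj, lineVerts_ncard hF hW]
  obtain ⟨u, huS, v, hvS, huv, hcol⟩ := clique_collinear hfrob hF hq3 S hSclique hScard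
  refine ⟨Submodule.span F {u.1.rep, v.1.rep}, (hSclique u huS v hvS huv).2, ?_⟩
  have hsub : S ⊆ lineVerts F q 2 (Submodule.span F {u.1.rep, v.1.rep}) := by
    intro x hx
    exact hcol x hx
  have hlv2 : (lineVerts F q 2 (Submodule.span F {u.1.rep, v.1.rep})).ncard = q ^ 2 :=
    lineVerts_ncard hF (hSclique u huS v hvS huv).2
  exact Set.eq_of_subset_of_ncard_le hsub (by rw [hlv2, hScard]) (Set.toFinite _)
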